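/- Let G be a 3-edge-connected graph with DFS tree T, let u and v be vertices not related as ancestor and descendant, and let w be a common ancestor of u and v. Then {(u,p(u)), (v,p(v)), (w,p(w))} is a 3-edge cut of G if and only if B(w) = B(u) ⊔ B(v). -/
import Mathlib


variable {V E : Type}

/-- Reachability in the multigraph with edge-endpoint map `ends`,
avoiding (i.e. after deleting) the edges in `S`. -/
def Reach (ends : E → V × V) (S : Set E) : V → V → Prop :=
  Relation.ReflTransGen (fun a b => ∃ e, e ∉ S ∧ (ends e = (a, b) ∨ ends e = (b, a)))

/-- The multigraph is connected. -/
def Connected (ends : E → V × V) : Prop := ∀ u v : V, Reach ends ∅ u v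

/-- `u` and `v` are `k`-edge-connected: no set of at most `k - 1` edges separates them. -/
def KConn (ends : E → V × V) (k : ℕ) (u v : V) : Prop :=
  ∀ S : Finset E, S.card ≤ k - 1 → Reach ends (↑S) u v

/-- The multigraph is `k`-edge-connected: no edge cut of size less than `k`. -/
def GraphKConn (ends : E → V × V) (k : ℕ) : Prop :=
  ∀ S : Finset E, S.card < k → ∀ u v : V, Reach ends (↑S) u v

/-- `S` is an edge cut: removing it disconnects the graph. -/
def IsCutSet (ends : E → V × V) (S : Set E) : Prop :=
  ∃ u v : V, ¬ Reach ends S u v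

/-- A (candidate) DFS tree on the multigraph `ends : E → V × V`: a root, a parent
function, a choice of a tree edge for each non-root vertex, and a preorder numbering. -/
structure DFSTree (V E : Type) where
  ends : E → V × V
  root : V
  parent : V → V
  treeEdge : V → E
  pre : V → ℕ

namespace DFSTree

variable (t : DFSTree V E)

/-- `t.Anc a b` : `a` is an ancestor of `b` (every vertex is an ancestor of itself). -/
def Anc (a b : V) : Prop :=
  Relation.ReflTransGen (fun x y => x ≠ t.root ∧ y = t.parent x) b a

/-- `a` is a proper ancestor of `b`. -/
def ProperAnc (a b : V) : Prop := t.Anc a b ∧ a ≠ b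

def IsTreeEdge (e : E) : Prop := ∃ v, v ≠ t.root ∧ e = t.treeEdge v

/-- The set `B(v)`: back-edges `(x, y)` with `x` a descendant of `v` and `y` a
proper ancestor of `v`. -/
def B (v : V) : Set E :=
  {e | ¬ t.IsTreeEdge e ∧ t.Anc v (t.ends e).1 ∧ t.ProperAnc (t.ends e).2 v}

/-- `m` is the nearest common ancestor of the set `S` of vertices. -/
def IsNCA (S : Set V) (m : V) : Prop :=
  (∀ x ∈ S, t.Anc m x) ∧ ∀ m' : V, (∀ x ∈ S, t.Anc m' x) → t.Anc m' m

/-- `m = M(v)`: the nearest common ancestor of all lower ends of back-edges in `B(v)`. -/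
def IsM (v m : V) : Prop := t.IsNCA {x | ∃ e ∈ t.B v, (t.ends e).1 = x} m

/-- `h = high(v)`: the highest (in preorder) upper end of a back-edge in `B(v)`. -/
def IsHigh (v h : V) : Prop :=
  (∃ e ∈ t.B v, (t.ends e).2 = h) ∧ ∀ e ∈ t.B v, t.pre (t.ends e).2 ≤ t.pre h

/-- `l = low(v)`: the lowest (in preorder) upper end of a back-edge in `B(v)`. -/
def IsLow (v l : V) : Prop :=
  (∃ e ∈ t.B v, (t.ends e).2 = l) ∧ ∀ e ∈ t.B v, t.pre l ≤ t.pre (t.ends e).2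

/-- `v` and `w` have the same `M`-value. -/
def SameM (v w : V) : Prop := ∃ m, t.IsM v m ∧ t.IsM w m

/-- `n = nextM(v)`: the greatest vertex smaller than `v` with the same `M`-value. -/
def IsNextM (v n : V) : Prop :=
  t.pre n < t.pre v ∧ t.SameM v n ∧
    ∀ z, t.pre z < t.pre v → t.SameM v z → t.pre z ≤ t.pre n

/-- `l = lastM(v)`: the smallest vertex with the same `M`-value as `v`. -/
def IsLastM (v l : V) : Prop :=
  t.SameM v l ∧ ∀ z, t.SameM v z → t.pre l ≤ t.pre z

/-- `t` really is a DFS spanning tree of the connected multigraph `ends`. -/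
structure IsDFS : Prop where
  conn : Connected t.ends
  parent_root : t.parent t.root = t.root
  tree_ends : ∀ v, v ≠ t.root → t.ends (t.treeEdge v) = (v, t.parent v)
  treeEdge_inj : ∀ v w, v ≠ t.root → w ≠ t.root → t.treeEdge v = t.treeEdge w → v = w
  back : ∀ e, ¬ t.IsTreeEdge e → t.Anc (t.ends e).2 (t.ends e).1
  pre_inj : Function.Injective t.pre
  pre_mono : ∀ a b, t.Anc a b → t.pre a ≤ t.pre b
  pre_interval : ∀ a b : V,
    t.pre a ≤ t.pre b → t.pre b < t.pre a + {x | t.Anc a x}.ncard → t.Anc a b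

end DFSTree

namespace DFSTree

section Helpers

variable {V E : Type} {t : DFSTree V E}

lemma anc_rfl {a : V} : t.Anc a a := Relation.ReflTransGen.refl

lemma anc_trans {a b c : V} (hab : t.Anc a b) (hbc : t.Anc b c) : t.Anc a c :=
  Relation.ReflTransGen.trans hbc hab

lemma anc_of_anc_parent {a b : V} (hb : b ≠ t.root) (h : t.Anc a (t.parent b)) :
    t.Anc a b :=
  Relation.ReflTransGen.head ⟨hb, rfl⟩ h

lemma anc_parent_self {b : V} (hb : b ≠ t.root) : t.Anc (t.parent b) b :=
  Relation.ReflTransGen.single ⟨hb, rfl⟩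

lemma anc_parent_of_proper {a b : V} (h : t.Anc a b) (hne : a ≠ b) :
    t.Anc a (t.parent b) := by
  rcases h.cases_head with h' | ⟨c, ⟨_, hc⟩, h2⟩
  · exact absurd h'.symm hne
  · rw [← hc]; exact h2

lemma anc_total {a x y : V} (hx : t.Anc x a) (hy : t.Anc y a) :
    t.Anc x y ∨ t.Anc y x := by
  induction hx with
  | refl => exact Or.inr hy
  | @tail c x hac hcx ih =>
    have hxc : t.Anc x c := Relation.ReflTransGen.single hcx
    rcases ih with h | h
    · exact Or.inl (anc_trans hxc h)
    · by_cases hyc : y = c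
      · exact Or.inl (hyc ▸ hxc)
      · exact Or.inr (hcx.2 ▸ anc_parent_of_proper h hyc)

lemma anc_antisymm (ht : t.IsDFS) {a b : V} (h1 : t.Anc a b) (h2 : t.Anc b a) :
    a = b :=
  ht.pre_inj (le_antisymm (ht.pre_mono a b h1) (ht.pre_mono b a h2))

lemma anc_root_eq {a : V} (h : t.Anc a t.root) : a = t.root := by
  rcases h.cases_head with h' | ⟨c, ⟨hr, _⟩, _⟩
  · exact h'.symm
  · exact absurd rfl hr

lemma desc_ne_root {a x : V} (h : t.Anc a x) (ha : a ≠ t.root) : x ≠ t.root :=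
  fun hx => ha (anc_root_eq (hx ▸ h))

lemma root_anc (ht : t.IsDFS) (z : V) : t.Anc t.root z := by
  have h := ht.conn t.root z
  induction h with
  | refl => exact anc_rfl
  | @tail c z' hrc hstep ih =>
    obtain ⟨e, _, hor⟩ := hstep
    by_cases hTe : t.IsTreeEdge e
    · obtain ⟨y, hyr, rfl⟩ := hTe
      have hends := ht.tree_ends y hyr
      rcases hor with h' | h'
      · obtain ⟨hy, hpy⟩ := Prod.mk.injEq _ _ _ _ ▸ (hends.symm.trans h')
        rw [← hpy]
        exact anc_parent_of_proper (hy ▸ ih) (fun hh => hyr (hy ▸ hh.symm))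
      · obtain ⟨hy, hpy⟩ := Prod.mk.injEq _ _ _ _ ▸ (hends.symm.trans h')
        rw [← hy]
        exact anc_of_anc_parent hyr (hpy ▸ ih)
    · have hb := ht.back e hTe
      rcases hor with h' | h'
      · have hb' : t.Anc z' c := by rw [h'] at hb; exact hb
        rcases anc_total ih hb' with h'' | h''
        · exact h''
        · rw [anc_root_eq h'']; exact anc_rfl
      · have hb' : t.Anc c z' := by rw [h'] at hb; exact hb
        exact anc_trans ih hb'

lemma parent_ne_self (ht : t.IsDFS) {a : V} (ha : a ≠ t.root) : t.parent a ≠ a := by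
  intro hpa
  have hra : t.Anc t.root a := root_anc ht a
  have hfix : ∀ x : V, Relation.ReflTransGen (fun x y => x ≠ t.root ∧ y = t.parent x) a x → x = a := by
    intro x hx
    induction hx with
    | refl => rfl
    | tail _ hst ih => rw [hst.2, ih, hpa]
  exact ha ((hfix t.root hra).symm ▸ rfl)

end Helpers

end DFSTree

lemma reach_symm {V E : Type} {ends : E → V × V} {S : Set E} {x y : V}
    (h : Reach ends S x y) : Reach ends S y x := by
  induction h with
  | refl => exact Relation.ReflTransGen.refl
  | tail _ hstep ih =>
    obtain ⟨e, he, hor⟩ := hstep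
    exact Relation.ReflTransGen.head ⟨e, he, hor.symm⟩ ih

/-- Let `u`, `v` be unrelated in the tree and `w` a common ancestor of both. Then
`{(u, p(u)), (v, p(v)), (w, p(w))}` is a 3-edge cut iff `B(w) = B(u) ⊔ B(v)`. -/
theorem cut_three_tree_edges_unrelated (t : DFSTree V E) (ht : t.IsDFS)
    (h3 : GraphKConn t.ends 3) (u v w : V)
    (hu : u ≠ t.root) (hv : v ≠ t.root) (hw : w ≠ t.root)
    (h1 : ¬ t.Anc u v) (h2 : ¬ t.Anc v u)
    (hwu : t.Anc w u) (hwv : t.Anc w v) :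
    IsCutSet t.ends {t.treeEdge u, t.treeEdge v, t.treeEdge w} ↔
      (t.B w = t.B u ∪ t.B v ∧ Disjoint (t.B u) (t.B v)) := by
  classical
  set S : Set E := {t.treeEdge u, t.treeEdge v, t.treeEdge w} with hSdef
  have hanti : ∀ {a b : V}, t.Anc a b → t.Anc b a → a = b :=
    fun h1 h2 => DFSTree.anc_antisymm ht h1 h2
  have hwu' : w ≠ u := fun h => h1 (h ▸ hwv)
  have hwv' : w ≠ v := fun h => h2 (h ▸ hwu)
  have hnotuw : ¬ t.Anc u w := fun h => hwu' (hanti hwu h)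
  have hnotvw : ¬ t.Anc v w := fun h => hwv' (hanti hwv h)
  have memS : ∀ e : E, e ∈ S ↔ e = t.treeEdge u ∨ e = t.treeEdge v ∨ e = t.treeEdge w := by
    intro e; simp [hSdef]
  have backNotS : ∀ e, ¬ t.IsTreeEdge e → e ∉ S := by
    intro e hnt hin
    rcases (memS e).1 hin with rfl | rfl | rfl
    · exact hnt ⟨u, hu, rfl⟩
    · exact hnt ⟨v, hv, rfl⟩
    · exact hnt ⟨w, hw, rfl⟩
  have estep : ∀ e, e ∉ S → ∀ a b : V, t.ends e = (a, b) → Reach t.ends S a b :=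
    fun e he a b h => Relation.ReflTransGen.single ⟨e, he, Or.inl h⟩
  have rtrans : ∀ {x y z : V}, Reach t.ends S x y → Reach t.ends S y z → Reach t.ends S x z :=
    fun h1 h2 => Relation.ReflTransGen.trans h1 h2
  have reach_up : ∀ (z a : V), t.Anc a z →
      (∀ x, t.Anc a x → t.Anc x z → x ≠ a → t.treeEdge x ∉ S) →
      Reach t.ends S z a := by
    intro z a h
    induction h with
    | refl => intro _; exact Relation.ReflTransGen.refl
    | @tail c x hzc hcx ih =>
      intro hcond
      obtain ⟨hcr, hxpc⟩ := hcx
      have hxc : x ≠ c := by rw [hxpc]; exact DFSTree.parent_ne_self ht hcr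
      have hAncxc : t.Anc x c := Relation.ReflTransGen.single ⟨hcr, hxpc⟩
      have hAnccz : t.Anc c z := hzc
      have ih' := ih (by
        intro y hy1 hy2 hy3
        refine hcond y (DFSTree.anc_trans hAncxc hy1) hy2 ?_
        intro hyx
        rw [hyx] at hy1
        exact hxc (hanti hAncxc hy1))
      have hnotS : t.treeEdge c ∉ S := hcond c hAncxc hAnccz (fun h => hxc h.symm)
      exact Relation.ReflTransGen.tail ih'
        ⟨t.treeEdge c, hnotS, Or.inl (by rw [ht.tree_ends c hcr, ← hxpc])⟩
  have reach_u : ∀ z, t.Anc u z → Reach t.ends S z u := by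
    intro z hz
    refine reach_up z u hz ?_
    intro x hx1 hx2 hx3 hxS
    have hxr : x ≠ t.root := DFSTree.desc_ne_root hx1 hu
    rcases (memS _).1 hxS with h | h | h
    · exact hx3 (ht.treeEdge_inj x u hxr hu h)
    · exact h1 ((ht.treeEdge_inj x v hxr hv h) ▸ hx1)
    · exact hnotuw ((ht.treeEdge_inj x w hxr hw h) ▸ hx1)
  have reach_v : ∀ z, t.Anc v z → Reach t.ends S z v := by
    intro z hz
    refine reach_up z v hz ?_
    intro x hx1 hx2 hx3 hxS
    have hxr : x ≠ t.root := DFSTree.desc_ne_root hx1 hv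
    rcases (memS _).1 hxS with h | h | h
    · exact h2 ((ht.treeEdge_inj x u hxr hu h) ▸ hx1)
    · exact hx3 (ht.treeEdge_inj x v hxr hv h)
    · exact hnotvw ((ht.treeEdge_inj x w hxr hw h) ▸ hx1)
  have reach_w : ∀ z, t.Anc w z → ¬ t.Anc u z → ¬ t.Anc v z → Reach t.ends S z w := by
    intro z hz hzu hzv
    refine reach_up z w hz ?_
    intro x hx1 hx2 hx3 hxS
    have hxr : x ≠ t.root := DFSTree.desc_ne_root hx1 hw
    rcases (memS _).1 hxS with h | h | h
    · exact hzu ((ht.treeEdge_inj x u hxr hu h) ▸ hx2)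
    · exact hzv ((ht.treeEdge_inj x v hxr hv h) ▸ hx2)
    · exact hx3 (ht.treeEdge_inj x w hxr hw h)
  have reach_r : ∀ z, ¬ t.Anc w z → Reach t.ends S z t.root := by
    intro z hz
    refine reach_up z t.root (DFSTree.root_anc ht z) ?_
    intro x hx1 hx2 hx3 hxS
    rcases (memS _).1 hxS with h | h | h
    · exact hz (DFSTree.anc_trans hwu ((ht.treeEdge_inj x u hx3 hu h) ▸ hx2))
    · exact hz (DFSTree.anc_trans hwv ((ht.treeEdge_inj x v hx3 hv h) ▸ hx2))
    · exact hz ((ht.treeEdge_inj x w hx3 hw h) ▸ hx2)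
  have hdisj : Disjoint (t.B u) (t.B v) := by
    rw [Set.disjoint_left]
    intro e heu hev
    rcases DFSTree.anc_total heu.2.1 hev.2.1 with h | h
    · exact h1 h
    · exact h2 h
  have BuW : ∀ e ∈ t.B u, e ∈ t.B w ∨
      (t.Anc w (t.ends e).2 ∧ ¬ t.Anc u (t.ends e).2 ∧ ¬ t.Anc v (t.ends e).2) := by
    intro e he
    obtain ⟨hnt, hua, hbu, hbu'⟩ := he
    have hX : t.Anc w (t.ends e).2 →
        (e ∈ t.B w ∨ (t.Anc w (t.ends e).2 ∧ ¬ t.Anc u (t.ends e).2 ∧ ¬ t.Anc v (t.ends e).2)) :=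
      fun hwb => Or.inr ⟨hwb, fun h => hbu' (hanti hbu h),
        fun h => h2 (DFSTree.anc_trans h hbu)⟩
    rcases DFSTree.anc_total hwu hbu with h | h
    · exact hX h
    · by_cases hbw : (t.ends e).2 = w
      · exact hX (by rw [hbw]; exact DFSTree.anc_rfl)
      · exact Or.inl ⟨hnt, DFSTree.anc_trans hwu hua, h, hbw⟩
  have BvW : ∀ e ∈ t.B v, e ∈ t.B w ∨
      (t.Anc w (t.ends e).2 ∧ ¬ t.Anc u (t.ends e).2 ∧ ¬ t.Anc v (t.ends e).2) := by
    intro e he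
    obtain ⟨hnt, hva, hbv, hbv'⟩ := he
    have hX : t.Anc w (t.ends e).2 →
        (e ∈ t.B w ∨ (t.Anc w (t.ends e).2 ∧ ¬ t.Anc u (t.ends e).2 ∧ ¬ t.Anc v (t.ends e).2)) :=
      fun hwb => Or.inr ⟨hwb, fun h => h1 (DFSTree.anc_trans h hbv),
        fun h => hbv' (hanti hbv h)⟩
    rcases DFSTree.anc_total hwv hbv with h | h
    · exact hX h
    · by_cases hbw : (t.ends e).2 = w
      · exact hX (by rw [hbw]; exact DFSTree.anc_rfl)
      · exact Or.inl ⟨hnt, DFSTree.anc_trans hwv hva, h, hbw⟩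
  have BwU : ∀ e ∈ t.B w, t.Anc u (t.ends e).1 → e ∈ t.B u := by
    intro e he hua
    refine ⟨he.1, hua, DFSTree.anc_trans he.2.2.1 hwu, ?_⟩
    intro hbu
    exact hnotuw (hbu ▸ he.2.2.1)
  have BwV : ∀ e ∈ t.B w, t.Anc v (t.ends e).1 → e ∈ t.B v := by
    intro e he hva
    refine ⟨he.1, hva, DFSTree.anc_trans he.2.2.1 hwv, ?_⟩
    intro hbv
    exact hnotvw (hbv ▸ he.2.2.1)
  constructor
  · intro hcut
    have crossing : ∀ (A : Set V) (S₀ : Finset E), S₀.card ≤ 2 → ∀ x ∈ A, ∀ y, y ∉ A →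
        ∃ e, e ∉ S₀ ∧ ∃ p q, (t.ends e = (p, q) ∨ t.ends e = (q, p)) ∧ p ∈ A ∧ q ∉ A := by
      intro A S₀ hcard x hx y hy
      by_contra hno
      have hreach := h3 S₀ (by omega) x y
      have hinv : ∀ z, Reach t.ends (↑S₀) x z → z ∈ A := by
        intro z hz
        induction hz with
        | refl => exact hx
        | @tail b c hxb hstep ih =>
          by_contra hcA
          obtain ⟨e, he, hor⟩ := hstep
          exact hno ⟨e, by simpa using he, b, c, hor, ih, hcA⟩
      exact hy (hinv y hreach)
    have linkU : Reach t.ends S u w ∨ Reach t.ends S u t.root := by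
      obtain ⟨e, heS0, p, q, hor, hp, hq⟩ := crossing {z | t.Anc u z} {t.treeEdge u}
        (by simp) u DFSTree.anc_rfl t.root (fun h => hu (DFSTree.anc_root_eq h))
      by_cases hTe : t.IsTreeEdge e
      · exfalso
        obtain ⟨y, hyr, rfl⟩ := hTe
        have hends := ht.tree_ends y hyr
        rcases hor with h' | h'
        · have hyp : y = p := congrArg Prod.fst (hends.symm.trans h')
          have hpq : t.parent y = q := congrArg Prod.snd (hends.symm.trans h')
          by_cases hyu : y = u
          · exact heS0 (by rw [hyu]; exact Finset.mem_singleton_self _)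
          · refine hq ?_
            rw [← hpq]
            exact DFSTree.anc_parent_of_proper (by rw [hyp]; exact hp) (fun h => hyu h.symm)
        · have hyq : y = q := congrArg Prod.fst (hends.symm.trans h')
          have hpp : t.parent y = p := congrArg Prod.snd (hends.symm.trans h')
          refine hq ?_
          rw [← hyq]
          exact DFSTree.anc_of_anc_parent hyr (by rw [hpp]; exact hp)
      · have hb := ht.back e hTe
        have heS : e ∉ S := backNotS e hTe
        rcases hor with h' | h'
        · have hqp : t.Anc q p := by rw [h'] at hb; exact hb
          have hqu : t.Anc q u := by
            rcases DFSTree.anc_total (hp : t.Anc u p) hqp with h'' | h''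
            · exact absurd h'' hq
            · exact h''
          have hqnu : ¬ t.Anc u q := hq
          by_cases hwq : t.Anc w q
          · have hqnv : ¬ t.Anc v q := fun h => h2 (DFSTree.anc_trans h hqu)
            exact Or.inl (rtrans (rtrans (reach_symm (reach_u p hp)) (estep e heS p q h'))
              (reach_w q hwq hqnu hqnv))
          · exact Or.inr (rtrans (rtrans (reach_symm (reach_u p hp)) (estep e heS p q h'))
              (reach_r q hwq))
        · have hpq : t.Anc p q := by rw [h'] at hb; exact hb
          exact absurd (DFSTree.anc_trans (hp : t.Anc u p) hpq) hq
    have linkV : Reach t.ends S v w ∨ Reach t.ends S v t.root := by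
      obtain ⟨e, heS0, p, q, hor, hp, hq⟩ := crossing {z | t.Anc v z} {t.treeEdge v}
        (by simp) v DFSTree.anc_rfl t.root (fun h => hv (DFSTree.anc_root_eq h))
      by_cases hTe : t.IsTreeEdge e
      · exfalso
        obtain ⟨y, hyr, rfl⟩ := hTe
        have hends := ht.tree_ends y hyr
        rcases hor with h' | h'
        · have hyp : y = p := congrArg Prod.fst (hends.symm.trans h')
          have hpq : t.parent y = q := congrArg Prod.snd (hends.symm.trans h')
          by_cases hyv : y = v
          · exact heS0 (by rw [hyv]; exact Finset.mem_singleton_self _)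
          · refine hq ?_
            rw [← hpq]
            exact DFSTree.anc_parent_of_proper (by rw [hyp]; exact hp) (fun h => hyv h.symm)
        · have hyq : y = q := congrArg Prod.fst (hends.symm.trans h')
          have hpp : t.parent y = p := congrArg Prod.snd (hends.symm.trans h')
          refine hq ?_
          rw [← hyq]
          exact DFSTree.anc_of_anc_parent hyr (by rw [hpp]; exact hp)
      · have hb := ht.back e hTe
        have heS : e ∉ S := backNotS e hTe
        rcases hor with h' | h'
        · have hqp : t.Anc q p := by rw [h'] at hb; exact hb
          have hqv : t.Anc q v := by
            rcases DFSTree.anc_total (hp : t.Anc v p) hqp with h'' | h''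
            · exact absurd h'' hq
            · exact h''
          have hqnv : ¬ t.Anc v q := hq
          by_cases hwq : t.Anc w q
          · have hqnu : ¬ t.Anc u q := fun h => h1 (DFSTree.anc_trans h hqv)
            exact Or.inl (rtrans (rtrans (reach_symm (reach_v p hp)) (estep e heS p q h'))
              (reach_w q hwq hqnu hqnv))
          · exact Or.inr (rtrans (rtrans (reach_symm (reach_v p hp)) (estep e heS p q h'))
              (reach_r q hwq))
        · have hpq : t.Anc p q := by rw [h'] at hb; exact hb
          exact absurd (DFSTree.anc_trans (hp : t.Anc v p) hpq) hq
    have linkW : Reach t.ends S u t.root ∨ Reach t.ends S v t.root ∨ Reach t.ends S w t.root := by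
      obtain ⟨e, heS0, p, q, hor, hp, hq⟩ := crossing {z | t.Anc w z} {t.treeEdge w}
        (by simp) w DFSTree.anc_rfl t.root (fun h => hw (DFSTree.anc_root_eq h))
      by_cases hTe : t.IsTreeEdge e
      · exfalso
        obtain ⟨y, hyr, rfl⟩ := hTe
        have hends := ht.tree_ends y hyr
        rcases hor with h' | h'
        · have hyp : y = p := congrArg Prod.fst (hends.symm.trans h')
          have hpq : t.parent y = q := congrArg Prod.snd (hends.symm.trans h')
          by_cases hyw : y = w
          · exact heS0 (by rw [hyw]; exact Finset.mem_singleton_self _)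
          · refine hq ?_
            rw [← hpq]
            exact DFSTree.anc_parent_of_proper (by rw [hyp]; exact hp) (fun h => hyw h.symm)
        · have hyq : y = q := congrArg Prod.fst (hends.symm.trans h')
          have hpp : t.parent y = p := congrArg Prod.snd (hends.symm.trans h')
          refine hq ?_
          rw [← hyq]
          exact DFSTree.anc_of_anc_parent hyr (by rw [hpp]; exact hp)
      · have hb := ht.back e hTe
        have heS : e ∉ S := backNotS e hTe
        rcases hor with h' | h'
        · have hqp : t.Anc q p := by rw [h'] at hb; exact hb
          have hq' : ¬ t.Anc w q := hq
          have link := estep e heS p q h'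
          by_cases hup : t.Anc u p
          · exact Or.inl (rtrans (rtrans (reach_symm (reach_u p hup)) link) (reach_r q hq'))
          · by_cases hvp : t.Anc v p
            · exact Or.inr (Or.inl (rtrans (rtrans (reach_symm (reach_v p hvp)) link)
                (reach_r q hq')))
            · exact Or.inr (Or.inr (rtrans (rtrans (reach_symm (reach_w p hp hup hvp)) link)
                (reach_r q hq')))
        · have hpq : t.Anc p q := by rw [h'] at hb; exact hb
          exact absurd (DFSTree.anc_trans (hp : t.Anc w p) hpq) hq
    have linkWV : Reach t.ends S u t.root ∨ Reach t.ends S w t.root ∨ Reach t.ends S v w := by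
      obtain ⟨e, heS0, p, q, hor, hp, hq⟩ := crossing {z | t.Anc w z ∧ ¬ t.Anc v z}
        ({t.treeEdge w, t.treeEdge v} : Finset E)
        ((Finset.card_insert_le _ _).trans (by simp)) w ⟨DFSTree.anc_rfl, hnotvw⟩ t.root
        (fun h => hw (DFSTree.anc_root_eq h.1))
      have hS0mem : ∀ e' : E, e' ∈ ({t.treeEdge w, t.treeEdge v} : Finset E) ↔
          e' = t.treeEdge w ∨ e' = t.treeEdge v := by intro e'; simp
      by_cases hTe : t.IsTreeEdge e
      · exfalso
        obtain ⟨y, hyr, rfl⟩ := hTe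
        have hends := ht.tree_ends y hyr
        have hyw : y ≠ w := fun h => heS0 ((hS0mem _).2 (Or.inl (by rw [h])))
        have hyv : y ≠ v := fun h => heS0 ((hS0mem _).2 (Or.inr (by rw [h])))
        rcases hor with h' | h'
        · have hyp : y = p := congrArg Prod.fst (hends.symm.trans h')
          have hpq : t.parent y = q := congrArg Prod.snd (hends.symm.trans h')
          subst hyp
          refine hq ⟨?_, ?_⟩
          · rw [← hpq]; exact DFSTree.anc_parent_of_proper hp.1 (fun h => hyw h.symm)
          · rw [← hpq]; intro hh; exact hp.2 (DFSTree.anc_of_anc_parent hyr hh)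
        · have hyq : y = q := congrArg Prod.fst (hends.symm.trans h')
          have hpp : t.parent y = p := congrArg Prod.snd (hends.symm.trans h')
          subst hyq
          have hwy : t.Anc w y := DFSTree.anc_of_anc_parent hyr (by rw [hpp]; exact hp.1)
          have hvy : t.Anc v y := Classical.byContradiction fun h => hq ⟨hwy, h⟩
          refine hp.2 ?_
          rw [← hpp]
          exact DFSTree.anc_parent_of_proper hvy (fun h => hyv h.symm)
      · have hb := ht.back e hTe
        have heS : e ∉ S := backNotS e hTe
        rcases hor with h' | h'
        · have hqp : t.Anc q p := by rw [h'] at hb; exact hb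
          have hq' : ¬ t.Anc w q := by
            intro hwq
            have hvq : t.Anc v q := Classical.byContradiction fun h => hq ⟨hwq, h⟩
            exact hp.2 (DFSTree.anc_trans hvq hqp)
          have link := estep e heS p q h'
          by_cases hup : t.Anc u p
          · exact Or.inl (rtrans (rtrans (reach_symm (reach_u p hup)) link) (reach_r q hq'))
          · exact Or.inr (Or.inl (rtrans (rtrans (reach_symm (reach_w p hp.1 hup hp.2)) link)
              (reach_r q hq')))
        · have hpq : t.Anc p q := by rw [h'] at hb; exact hb
          have hwq : t.Anc w q := DFSTree.anc_trans hp.1 hpq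
          have hvq : t.Anc v q := Classical.byContradiction fun h => hq ⟨hwq, h⟩
          have hpv : t.Anc p v := by
            rcases DFSTree.anc_total hvq hpq with h'' | h''
            · exact absurd h'' hp.2
            · exact h''
          have hnup : ¬ t.Anc u p := fun h => h1 (DFSTree.anc_trans h hpv)
          exact Or.inr (Or.inr (rtrans (rtrans (reach_symm (reach_v q hvq))
            (estep e heS q p h')) (reach_w p hp.1 hnup hp.2)))
    have linkWU : Reach t.ends S v t.root ∨ Reach t.ends S w t.root ∨ Reach t.ends S u w := by
      obtain ⟨e, heS0, p, q, hor, hp, hq⟩ := crossing {z | t.Anc w z ∧ ¬ t.Anc u z}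
        ({t.treeEdge w, t.treeEdge u} : Finset E)
        ((Finset.card_insert_le _ _).trans (by simp)) w ⟨DFSTree.anc_rfl, hnotuw⟩ t.root
        (fun h => hw (DFSTree.anc_root_eq h.1))
      have hS0mem : ∀ e' : E, e' ∈ ({t.treeEdge w, t.treeEdge u} : Finset E) ↔
          e' = t.treeEdge w ∨ e' = t.treeEdge u := by intro e'; simp
      by_cases hTe : t.IsTreeEdge e
      · exfalso
        obtain ⟨y, hyr, rfl⟩ := hTe
        have hends := ht.tree_ends y hyr
        have hyw : y ≠ w := fun h => heS0 ((hS0mem _).2 (Or.inl (by rw [h])))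
        have hyu : y ≠ u := fun h => heS0 ((hS0mem _).2 (Or.inr (by rw [h])))
        rcases hor with h' | h'
        · have hyp : y = p := congrArg Prod.fst (hends.symm.trans h')
          have hpq : t.parent y = q := congrArg Prod.snd (hends.symm.trans h')
          subst hyp
          refine hq ⟨?_, ?_⟩
          · rw [← hpq]; exact DFSTree.anc_parent_of_proper hp.1 (fun h => hyw h.symm)
          · rw [← hpq]; intro hh; exact hp.2 (DFSTree.anc_of_anc_parent hyr hh)
        · have hyq : y = q := congrArg Prod.fst (hends.symm.trans h')
          have hpp : t.parent y = p := congrArg Prod.snd (hends.symm.trans h')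
          subst hyq
          have hwy : t.Anc w y := DFSTree.anc_of_anc_parent hyr (by rw [hpp]; exact hp.1)
          have huy : t.Anc u y := Classical.byContradiction fun h => hq ⟨hwy, h⟩
          refine hp.2 ?_
          rw [← hpp]
          exact DFSTree.anc_parent_of_proper huy (fun h => hyu h.symm)
      · have hb := ht.back e hTe
        have heS : e ∉ S := backNotS e hTe
        rcases hor with h' | h'
        · have hqp : t.Anc q p := by rw [h'] at hb; exact hb
          have hq' : ¬ t.Anc w q := by
            intro hwq
            have huq : t.Anc u q := Classical.byContradiction fun h => hq ⟨hwq, h⟩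
            exact hp.2 (DFSTree.anc_trans huq hqp)
          have link := estep e heS p q h'
          by_cases hvp : t.Anc v p
          · exact Or.inl (rtrans (rtrans (reach_symm (reach_v p hvp)) link) (reach_r q hq'))
          · exact Or.inr (Or.inl (rtrans (rtrans (reach_symm (reach_w p hp.1 hp.2 hvp)) link)
              (reach_r q hq')))
        · have hpq : t.Anc p q := by rw [h'] at hb; exact hb
          have hwq : t.Anc w q := DFSTree.anc_trans hp.1 hpq
          have huq : t.Anc u q := Classical.byContradiction fun h => hq ⟨hwq, h⟩
          have hpu : t.Anc p u := by
            rcases DFSTree.anc_total huq hpq with h'' | h''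
            · exact absurd h'' hp.2
            · exact h''
          have hnvp : ¬ t.Anc v p := fun h => h2 (DFSTree.anc_trans h hpu)
          exact Or.inr (Or.inr (rtrans (rtrans (reach_symm (reach_u q huq))
            (estep e heS q p h')) (reach_w p hp.1 hp.2 hnvp)))
    have final : Reach t.ends S u w → Reach t.ends S v w → Reach t.ends S w t.root →
        ∀ x y : V, Reach t.ends S x y := by
      intro Luw Lvw Lwr
      have main : ∀ z, Reach t.ends S z w := by
        intro z
        by_cases hzw : t.Anc w z
        · by_cases hzu : t.Anc u z
          · exact rtrans (reach_u z hzu) Luw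
          · by_cases hzv : t.Anc v z
            · exact rtrans (reach_v z hzv) Lvw
            · exact reach_w z hzw hzu hzv
        · exact rtrans (reach_r z hzw) (reach_symm Lwr)
      exact fun x y => rtrans (main x) (reach_symm (main y))
    have mk : ¬ Reach t.ends S w t.root := by
      intro Lwr
      have Luw : Reach t.ends S u w := linkU.elim id (fun h => rtrans h (reach_symm Lwr))
      have Lvw : Reach t.ends S v w := linkV.elim id (fun h => rtrans h (reach_symm Lwr))
      obtain ⟨x, y, hxy⟩ := hcut
      exact hxy (final Luw Lvw Lwr x y)
    have noLuw : ¬ Reach t.ends S u w := by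
      intro Luw
      have noLur : ¬ Reach t.ends S u t.root := fun h => mk (rtrans (reach_symm Luw) h)
      rcases linkW with h | h | h
      · exact noLur h
      · rcases linkWV with h' | h' | h'
        · exact noLur h'
        · exact mk h'
        · exact mk (rtrans (reach_symm h') h)
      · exact mk h
    have noLvw : ¬ Reach t.ends S v w := by
      intro Lvw
      have noLvr : ¬ Reach t.ends S v t.root := fun h => mk (rtrans (reach_symm Lvw) h)
      rcases linkW with h | h | h
      · rcases linkWU with h' | h' | h'
        · exact noLvr h'
        · exact mk h'
        · exact mk (rtrans (reach_symm h') h)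
      · exact noLvr h
      · exact mk h
    have incl1 : t.B u ⊆ t.B w := by
      intro e he
      rcases BuW e he with h | hX
      · exact h
      · exfalso
        apply noLuw
        have heS := backNotS e he.1
        exact rtrans (rtrans (reach_symm (reach_u _ he.2.1)) (estep e heS _ _ rfl))
          (reach_w _ hX.1 hX.2.1 hX.2.2)
    have incl2 : t.B v ⊆ t.B w := by
      intro e he
      rcases BvW e he with h | hX
      · exact h
      · exfalso
        apply noLvw
        have heS := backNotS e he.1
        exact rtrans (rtrans (reach_symm (reach_v _ he.2.1)) (estep e heS _ _ rfl))
          (reach_w _ hX.1 hX.2.1 hX.2.2)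
    have incl3 : t.B w ⊆ t.B u ∪ t.B v := by
      intro e he
      by_cases hAu : t.Anc u (t.ends e).1
      · exact Set.mem_union_left _ (BwU e he hAu)
      · by_cases hAv : t.Anc v (t.ends e).1
        · exact Set.mem_union_right _ (BwV e he hAv)
        · exfalso
          apply mk
          have heS := backNotS e he.1
          have hnq : ¬ t.Anc w (t.ends e).2 := fun h => he.2.2.2 (hanti he.2.2.1 h)
          exact rtrans (rtrans (reach_symm (reach_w _ he.2.1 hAu hAv)) (estep e heS _ _ rfl))
            (reach_r _ hnq)
    exact ⟨Set.Subset.antisymm incl3 (Set.union_subset incl1 incl2), hdisj⟩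
  · rintro ⟨hBeq, -⟩
    refine ⟨w, u, ?_⟩
    intro hr
    have inv : ∀ z, Reach t.ends S w z → t.Anc w z ∧ ¬ t.Anc u z ∧ ¬ t.Anc v z := by
      intro z hz
      induction hz with
      | refl =>
        exact ⟨DFSTree.anc_rfl, fun h => hwu' (hanti hwu h), fun h => hwv' (hanti hwv h)⟩
      | @tail z z' hwz hstep ih =>
        obtain ⟨hwz', hnu, hnv⟩ := ih
        obtain ⟨e, heS, hor⟩ := hstep
        by_cases hTe : t.IsTreeEdge e
        · obtain ⟨y, hyr, rfl⟩ := hTe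
          have hends := ht.tree_ends y hyr
          have hyu : y ≠ u := fun h => heS ((memS _).2 (Or.inl (by rw [h])))
          have hyv : y ≠ v := fun h => heS ((memS _).2 (Or.inr (Or.inl (by rw [h]))))
          have hyw : y ≠ w := fun h => heS ((memS _).2 (Or.inr (Or.inr (by rw [h]))))
          rcases hor with h' | h'
          · have hy : y = z := congrArg Prod.fst (hends.symm.trans h')
            have hpy : t.parent y = z' := congrArg Prod.snd (hends.symm.trans h')
            subst hy
            refine ⟨?_, ?_, ?_⟩
            · rw [← hpy]; exact DFSTree.anc_parent_of_proper hwz' (fun h => hyw h.symm)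
            · rw [← hpy]; intro hh; exact hnu (DFSTree.anc_of_anc_parent hyr hh)
            · rw [← hpy]; intro hh; exact hnv (DFSTree.anc_of_anc_parent hyr hh)
          · have hy : y = z' := congrArg Prod.fst (hends.symm.trans h')
            have hpy : t.parent y = z := congrArg Prod.snd (hends.symm.trans h')
            subst hy
            refine ⟨DFSTree.anc_of_anc_parent hyr (by rw [hpy]; exact hwz'), ?_, ?_⟩
            · intro hh
              exact hnu (by rw [← hpy]; exact DFSTree.anc_parent_of_proper hh (fun h => hyu h.symm))
            · intro hh
              exact hnv (by rw [← hpy]; exact DFSTree.anc_parent_of_proper hh (fun h => hyv h.symm))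
        · have hb := ht.back e hTe
          rcases hor with h' | h'
          · have hb' : t.Anc z' z := by rw [h'] at hb; exact hb
            rcases DFSTree.anc_total hwz' hb' with h'' | h''
            · exact ⟨h'', fun hh => hnu (DFSTree.anc_trans hh hb'),
                fun hh => hnv (DFSTree.anc_trans hh hb')⟩
            · by_cases hzw : z' = w
              · subst hzw
                exact ⟨DFSTree.anc_rfl, fun h => hwu' (hanti hwu h), fun h => hwv' (hanti hwv h)⟩
              · exfalso
                have heBw : e ∈ t.B w :=
                  ⟨hTe, by rw [h']; exact hwz', by rw [h']; exact h'', by rw [h']; exact hzw⟩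
                have hUV : e ∈ t.B u ∪ t.B v := by rw [← hBeq]; exact heBw
                rcases hUV with h3' | h3'
                · have := h3'.2.1; rw [h'] at this; exact hnu this
                · have := h3'.2.1; rw [h'] at this; exact hnv this
          · have hb' : t.Anc z z' := by rw [h'] at hb; exact hb
            have hAwz' : t.Anc w z' := DFSTree.anc_trans hwz' hb'
            refine ⟨hAwz', ?_, ?_⟩
            · intro hh
              have hzu : t.Anc z u := by
                rcases DFSTree.anc_total hh hb' with h'' | h''
                · exact absurd h'' hnu
                · exact h''
              have hznu : z ≠ u := fun h => hnu (by rw [h]; exact DFSTree.anc_rfl)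
              have heBu : e ∈ t.B u :=
                ⟨hTe, by rw [h']; exact hh, by rw [h']; exact hzu, by rw [h']; exact hznu⟩
              have heBw : e ∈ t.B w := by rw [hBeq]; exact Set.mem_union_left _ heBu
              have hprop := heBw.2.2
              rw [h'] at hprop
              exact hprop.2 (hanti hprop.1 hwz')
            · intro hh
              have hzv : t.Anc z v := by
                rcases DFSTree.anc_total hh hb' with h'' | h''
                · exact absurd h'' hnv
                · exact h''
              have hznv : z ≠ v := fun h => hnv (by rw [h]; exact DFSTree.anc_rfl)
              have heBv : e ∈ t.B v :=
                ⟨hTe, by rw [h']; exact hh, by rw [h']; exact hzv, by rw [h']; exact hznv⟩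
              have heBw : e ∈ t.B w := by rw [hBeq]; exact Set.mem_union_right _ heBv
              have hprop := heBw.2.2
              rw [h'] at hprop
              exact hprop.2 (hanti hprop.1 hwz')
    exact (inv u hr).2.1 DFSTree.anc_rfl
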